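/- For a composition s = (s_1,...,s_n) of positive integers, the set of Stirling s-permutations is in bijection with the set of s-decreasing trees. In particular, the number of Stirling s-permutations equals ∏_{i=1}^{n-1} (1 + s_{n-i+1} + s_{n-i+2} + ··· + s_n). -/

import Mathlib

namespace SPermutahedron

/-! ### Planar rooted trees and `s`-decreasing trees -/

/-- A planar rooted tree: either a leaf, or an internal node with a natural
number label and an ordered list of children. -/
inductive PTree where
  | leaf : PTree
  | node : ℕ → List PTree → PTree

mutual
  /-- The list of labels of the internal nodes of a planar tree. -/
  def labels : PTree → List ℕ
    | .leaf => []
    | .node i cs => i :: labelsList cs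
  def labelsList : List PTree → List ℕ
    | [] => []
    | t :: ts => labels t ++ labelsList ts
end

mutual
  /-- Local condition for an `s`-decreasing tree: node `i` has `s i + 1`
  children and every internal-node descendant of `i` has a label `< i`. -/
  def IsSDecAux (s : ℕ → ℕ) : PTree → Prop
    | .leaf => True
    | .node i cs => cs.length = s i + 1 ∧ (∀ j ∈ labelsList cs, j < i) ∧ IsSDecList s cs
  def IsSDecList (s : ℕ → ℕ) : List PTree → Prop
    | [] => True
    | t :: ts => IsSDecAux s t ∧ IsSDecList s ts
end

/-- `T` is an `s`-decreasing tree on `n` internal nodes: its internal nodes are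
labeled bijectively by `1, …, n`, node `i` has `s i + 1` children, and any
internal-node descendant `j` of a node `i` satisfies `j < i`. -/
def IsSDecTree (s : ℕ → ℕ) (n : ℕ) (T : PTree) : Prop :=
  IsSDecAux s T ∧ (labels T).Perm (List.range' 1 n)

/-! ### Stirling `s`-permutations -/

/-- A word avoids the pattern `121`: there is never a letter `j` strictly in
between two occurrences of a letter `i` with `i < j`. -/
def Avoids121 (w : List ℕ) : Prop :=
  ¬ ∃ (u₁ u₂ u₃ u₄ : List ℕ) (i j : ℕ), i < j ∧
      w = u₁ ++ i :: u₂ ++ j :: u₃ ++ i :: u₄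

/-- A Stirling `s`-permutation: a permutation of the word `1^{s 1} 2^{s 2} ⋯ n^{s n}`
avoiding the pattern `121`. -/
def IsStirling (s : ℕ → ℕ) (n : ℕ) (w : List ℕ) : Prop :=
  (∀ x ∈ w, 1 ≤ x ∧ x ≤ n) ∧ (∀ i, 1 ≤ i → i ≤ n → w.count i = s i) ∧ Avoids121 w

/-- `(a, c)` is an ascent of `w`: `a < c` and `ac` is a consecutive substring. -/
def WordAscent (w : List ℕ) (a c : ℕ) : Prop :=
  a < c ∧ ∃ u v, w = u ++ a :: c :: v

/-- `(a, c)` is a descent of `w`: `a < c` and `ca` is a consecutive substring. -/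
def WordDescent (w : List ℕ) (a c : ℕ) : Prop :=
  a < c ∧ ∃ u v, w = u ++ c :: a :: v

/-- The inversion multiplicity `#_w(c, a)`: the number of occurrences of `c`
preceding the `a`-block of `w` (i.e. preceding the first occurrence of `a`). -/
def invW (w : List ℕ) (c a : ℕ) : ℕ := (w.takeWhile (fun x => decide (x ≠ a))).count c


open List

theorem pattern_iff_sublist (w : List ℕ) (i j : ℕ) :
    (∃ u₁ u₂ u₃ u₄, w = u₁ ++ i :: u₂ ++ j :: u₃ ++ i :: u₄) ↔ [i, j, i] <+ w := by
  constructor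
  · rintro ⟨u₁, u₂, u₃, u₄, rfl⟩
    have h3 : [i] <+ u₃ ++ i :: u₄ :=
      (singleton_sublist).2 (by simp)
    have h4 : [j, i] <+ j :: (u₃ ++ i :: u₄) := h3.cons₂ j
    have h5 : [j, i] <+ u₂ ++ j :: (u₃ ++ i :: u₄) :=
      h4.trans (sublist_append_right u₂ _)
    have h6 : [i, j, i] <+ i :: (u₂ ++ j :: (u₃ ++ i :: u₄)) := h5.cons₂ i
    have h7 := h6.trans (sublist_append_right u₁ _)
    simpa using h7
  · intro h
    rw [List.cons_sublist_iff] at h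
    obtain ⟨r₁, r₂, rfl, hi, h⟩ := h
    rw [List.cons_sublist_iff] at h
    obtain ⟨r₃, r₄, rfl, hj, h⟩ := h
    rw [List.cons_sublist_iff] at h
    obtain ⟨r₅, r₆, rfl, hi2, -⟩ := h
    obtain ⟨a₁, a₂, rfl⟩ := List.append_of_mem hi
    obtain ⟨b₁, b₂, rfl⟩ := List.append_of_mem hj
    obtain ⟨c₁, c₂, rfl⟩ := List.append_of_mem hi2
    exact ⟨a₁, a₂ ++ b₁, b₂ ++ c₁, c₂ ++ r₆, by simp⟩

theorem avoids121_iff (w : List ℕ) :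
    Avoids121 w ↔ ∀ i j : ℕ, i < j → ¬ [i, j, i] <+ w := by
  unfold Avoids121
  constructor
  · intro h i j hij hsub
    exact h ⟨_, _, _, _, i, j, hij, ((pattern_iff_sublist w i j).2 hsub).choose_spec.choose_spec.choose_spec.choose_spec⟩
  · rintro h ⟨u₁, u₂, u₃, u₄, i, j, hij, rfl⟩
    exact h i j hij ((pattern_iff_sublist _ i j).1 ⟨u₁, u₂, u₃, u₄, rfl⟩)

theorem Avoids121.sublist {w w' : List ℕ} (h : Avoids121 w) (hsub : w' <+ w) :
    Avoids121 w' := by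
  rw [avoids121_iff] at *
  exact fun i j hij hs => h i j hij (hs.trans hsub)

/-- Stirling words on the letters `a, …, n`. -/
def StP (s : ℕ → ℕ) (n a : ℕ) (w : List ℕ) : Prop :=
  (∀ x ∈ w, a ≤ x ∧ x ≤ n) ∧ (∀ i, a ≤ i → i ≤ n → w.count i = s i) ∧ Avoids121 w

def insW (a k : ℕ) (w : List ℕ) (p : ℕ) : List ℕ :=
  w.take p ++ List.replicate k a ++ w.drop p

def delW (a : ℕ) (w : List ℕ) : List ℕ := w.filter (fun x => decide (x ≠ a))

def posW (a : ℕ) (w : List ℕ) : ℕ := (w.takeWhile (fun x => decide (x ≠ a))).length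

theorem length_eq_sum {w : List ℕ} {F : Finset ℕ} (h : ∀ x ∈ w, x ∈ F) :
    w.length = ∑ i ∈ F, w.count i := by
  induction w with
  | nil => simp
  | cons x w ih =>
    have hx : x ∈ F := h x (List.mem_cons_self)
    have := ih (fun y hy => h y (List.mem_cons_of_mem _ hy))
    simp only [List.length_cons, List.count_cons, this, Finset.sum_add_distrib, beq_iff_eq]
    simp [Finset.sum_ite_eq, hx]

/-- In a 121-avoiding word whose letters are all `≥ a`, the occurrences of `a`
form a contiguous block. -/
theorem block_lemma (a : ℕ) (w : List ℕ) (hmin : ∀ x ∈ w, a ≤ x) (hav : Avoids121 w) :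
    ∃ u v, w = u ++ List.replicate (w.count a) a ++ v ∧ a ∉ u ∧ a ∉ v := by
  induction w with
  | nil => exact ⟨[], [], by simp⟩
  | cons x w ih =>
    have hmin' : ∀ y ∈ w, a ≤ y := fun y hy => hmin y (List.mem_cons_of_mem _ hy)
    have hav' : Avoids121 w := hav.sublist (List.sublist_cons_self x w)
    obtain ⟨u, v, hw, hu, hv⟩ := ih hmin' hav'
    by_cases hx : x = a
    · subst hx
      by_cases hc : w.count x = 0
      · have haw : x ∉ w := by
          intro hmem
          have := (List.count_pos_iff).2 hmem
          omega
        refine ⟨[], w, ?_, by simp, haw⟩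
        simp [List.count_cons_self, hc]
      · rcases u with _ | ⟨y, u'⟩
        · refine ⟨[], v, ?_, by simp, hv⟩
          rw [List.count_cons_self, List.replicate_succ]
          simpa using hw
        · exfalso
          have hy : y ≠ x := fun h => hu (h ▸ List.mem_cons_self)
          have hylt : x < y := lt_of_le_of_ne (hmin' y (by rw [hw]; simp)) (Ne.symm hy)
          have hxrep : x ∈ List.replicate (w.count x) x :=
            List.mem_replicate.2 ⟨hc, rfl⟩
          have h1 : [x] <+ u' ++ (List.replicate (w.count x) x ++ v) :=
            List.singleton_sublist.2 (by simp [hxrep])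
          have h2 : [y, x] <+ w := by
            rw [hw]
            simpa using h1.cons₂ y
          have h3 : [x, y, x] <+ x :: w := h2.cons₂ x
          exact (avoids121_iff _).1 hav x y hylt h3
    · refine ⟨x :: u, v, ?_, ?_, hv⟩
      · have hcc : (x :: w).count a = w.count a := by
          simp [List.count_cons, Ne.symm hx, hx]
        rw [hcc, List.cons_append, List.cons_append]
        exact congrArg (List.cons x) hw
      · intro hmem
        rcases List.mem_cons.1 hmem with h | h
        · exact hx h.symm
        · exact hu h

theorem takeWhile_block {a : ℕ} {u rest : List ℕ} (hu : a ∉ u) :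
    (u ++ a :: rest).takeWhile (fun x => decide (x ≠ a)) = u := by
  have h1 : u.takeWhile (fun x => decide (x ≠ a)) = u :=
    List.takeWhile_eq_self_iff.2 (fun x hx => by simp; exact fun h => hu (h ▸ hx))
  rw [List.takeWhile_append, h1]
  simp

theorem filter_replicate_self {a k : ℕ} :
    List.filter (fun x => decide (x ≠ a)) (List.replicate k a) = [] :=
  List.filter_eq_nil_iff.2 (fun x hx => by
    have := List.eq_of_mem_replicate hx
    simp [this])

theorem delW_block {a k : ℕ} {u v : List ℕ} (hu : a ∉ u) (hv : a ∉ v) :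
    delW a (u ++ List.replicate k a ++ v) = u ++ v := by
  have fu : u.filter (fun x => decide (x ≠ a)) = u :=
    List.filter_eq_self.2 (fun x hx => by simp; exact fun h => hu (h ▸ hx))
  have fv : v.filter (fun x => decide (x ≠ a)) = v :=
    List.filter_eq_self.2 (fun x hx => by simp; exact fun h => hv (h ▸ hx))
  rw [delW, List.filter_append, List.filter_append, fu, fv, filter_replicate_self, List.append_nil]

theorem posW_block {a k : ℕ} (hk : 1 ≤ k) {u v : List ℕ} (hu : a ∉ u) :
    posW a (u ++ List.replicate k a ++ v) = u.length := by
  obtain ⟨m, rfl⟩ : ∃ m, k = m + 1 := ⟨k - 1, by omega⟩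
  rw [posW, List.append_assoc, List.replicate_succ, List.cons_append, takeWhile_block hu]

theorem insW_block {a k : ℕ} {u v : List ℕ} :
    insW a k (u ++ v) u.length = u ++ List.replicate k a ++ v := by
  rw [insW, List.take_left, List.drop_left]

theorem avoids_ins {a k : ℕ} {u v : List ℕ} (hu : a ∉ u) (hv : a ∉ v)
    (hmin : ∀ x ∈ u ++ v, a < x) (hav : Avoids121 (u ++ v)) :
    Avoids121 (u ++ List.replicate k a ++ v) := by
  have fu : u.filter (fun x => decide (x ≠ a)) = u :=
    List.filter_eq_self.2 (fun x hx => by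
      have := hmin x (List.mem_append.2 (Or.inl hx)); simp; omega)
  have fv : v.filter (fun x => decide (x ≠ a)) = v :=
    List.filter_eq_self.2 (fun x hx => by
      have := hmin x (List.mem_append.2 (Or.inr hx)); simp; omega)
  rw [avoids121_iff]
  intro i j hij hsub
  rw [List.append_assoc] at hsub
  by_cases hia : i = a
  · rw [hia] at hsub
    have hja : j ≠ a := by omega
    obtain ⟨l₁, l₂, heq, h₁, h₂⟩ := List.sublist_append_iff.1 hsub
    have hl₁ : l₁ = [] := by
      cases l₁ with
      | nil => rfl
      | cons y t =>
        exfalso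
        have : y = a := by simpa using congrArg (fun l => l.head?) heq.symm
        exact hu (h₁.subset (this ▸ List.mem_cons_self))
    subst hl₁
    simp only [List.nil_append] at heq
    obtain ⟨l₃, l₄, heq2, h₃, h₄⟩ := List.sublist_append_iff.1 (heq ▸ h₂)
    have hall : ∀ x ∈ l₃, a = x := fun x hx =>
      (List.eq_of_mem_replicate (h₃.subset hx)).symm
    have ha4 : a ∉ l₄ := fun h => hv (h₄.subset h)
    have hc3 : l₃.count a = l₃.length := List.count_eq_length.2 hall
    have hc : l₃.count a + l₄.count a = 2 := by
      have := congrArg (List.count a) heq2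
      simp [List.count_append, List.count_cons, hja] at this
      omega
    have hc4 : l₄.count a = 0 := List.count_eq_zero.2 ha4
    have hlen : l₃.length = 2 := by omega
    have hl₃ : l₃ = [a, a] := by
      have := List.eq_replicate_iff.2 ⟨hlen, fun b hb => (hall b hb).symm⟩
      simpa using this
    rw [hl₃] at heq2
    simp at heq2
    exact hja heq2.1
  · have hja : j ≠ a := by
      intro h
      have hmem : i ∈ u ++ (List.replicate k a ++ v) := hsub.subset (by simp)
      rcases List.mem_append.1 hmem with h1 | h1
      · have := hmin i (List.mem_append.2 (Or.inl h1)); omega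
      · rcases List.mem_append.1 h1 with h1 | h1
        · exact hia (List.eq_of_mem_replicate h1)
        · have := hmin i (List.mem_append.2 (Or.inr h1)); omega
    have hf := hsub.filter (fun x => decide (x ≠ a))
    have hfi : List.filter (fun x => decide (x ≠ a)) [i, j, i] = [i, j, i] := by
      simp [hia, hja]
    have hmid : List.filter (fun x => decide (x ≠ a)) (u ++ (List.replicate k a ++ v))
        = u ++ v := by
      rw [List.filter_append, List.filter_append, fu, fv, filter_replicate_self,
        List.nil_append]
    rw [hfi, hmid] at hf
    exact (avoids121_iff _).1 hav i j hij hf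

theorem StP_del {s : ℕ → ℕ} {n a : ℕ} {w : List ℕ} (han : a ≤ n) (hsa : 1 ≤ s a)
    (h : StP s n a w) :
    StP s n (a+1) (delW a w) ∧ insW a (s a) (delW a w) (posW a w) = w ∧
    posW a w ≤ (delW a w).length := by
  obtain ⟨hrange, hcount, hav⟩ := h
  have hca : w.count a = s a := hcount a le_rfl han
  obtain ⟨u, v, hw, hu, hv⟩ := block_lemma a w (fun x hx => (hrange x hx).1) hav
  rw [hca] at hw
  have hdel : delW a w = u ++ v := by rw [hw]; exact delW_block hu hv
  have hpos : posW a w = u.length := by rw [hw]; exact posW_block hsa hu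
  refine ⟨⟨?_, ?_, ?_⟩, ?_, ?_⟩
  · intro x hx
    rw [hdel] at hx
    have hxw : x ∈ w := by
      rw [hw]
      rcases List.mem_append.1 hx with h1 | h1
      · exact List.mem_append.2 (Or.inl (List.mem_append.2 (Or.inl h1)))
      · exact List.mem_append.2 (Or.inr h1)
    have hxa : x ≠ a := by
      rcases List.mem_append.1 hx with h1 | h1
      · exact fun he => hu (he ▸ h1)
      · exact fun he => hv (he ▸ h1)
    have := hrange x hxw
    omega
  · intro i hi1 hi2
    have hcw : w.count i = s i := hcount i (by omega) hi2
    have hia : i ≠ a := by omega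
    rw [hw] at hcw
    rw [hdel]
    simp only [List.count_append] at hcw ⊢
    rw [List.count_replicate, if_neg (by simp; omega)] at hcw
    omega
  · exact hav.sublist List.filter_sublist
  · rw [hdel, hpos, insW_block]; exact hw.symm
  · rw [hdel, hpos]; simp

theorem StP_ins {s : ℕ → ℕ} {n a : ℕ} {w : List ℕ} {p : ℕ} (han : a ≤ n)
    (hsa : 1 ≤ s a) (h : StP s n (a+1) w) (hp : p ≤ w.length) :
    StP s n a (insW a (s a) w p) ∧ delW a (insW a (s a) w p) = w ∧
    posW a (insW a (s a) w p) = p := by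
  obtain ⟨hrange, hcount, hav⟩ := h
  have huv : w.take p ++ w.drop p = w := List.take_append_drop p w
  have hul : (w.take p).length = p := by rw [List.length_take]; omega
  have hu : a ∉ w.take p := fun hm =>
    absurd (hrange a (huv ▸ List.mem_append.2 (Or.inl hm))).1 (by omega)
  have hv : a ∉ w.drop p := fun hm =>
    absurd (hrange a (huv ▸ List.mem_append.2 (Or.inr hm))).1 (by omega)
  have hins : insW a (s a) w p = w.take p ++ List.replicate (s a) a ++ w.drop p := rfl
  have hmin : ∀ x ∈ w.take p ++ w.drop p, a < x := fun x hx => by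
    have := (hrange x (huv ▸ hx)).1; omega
  refine ⟨⟨?_, ?_, ?_⟩, ?_, ?_⟩
  · intro x hx
    rw [hins, List.append_assoc] at hx
    rcases List.mem_append.1 hx with h1 | h1
    · have := hrange x (huv ▸ List.mem_append.2 (Or.inl h1)); omega
    · rcases List.mem_append.1 h1 with h1 | h1
      · have := List.eq_of_mem_replicate h1; omega
      · have := hrange x (huv ▸ List.mem_append.2 (Or.inr h1)); omega
  · intro i hi1 hi2
    rw [hins]
    by_cases hia : i = a
    · subst hia
      have h0 : w.count i = 0 := List.count_eq_zero.2 (fun hm => by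
        have := (hrange i hm).1; omega)
      rw [← huv] at h0
      simp only [List.count_append] at h0 ⊢
      rw [List.count_replicate, if_pos (by simp)]
      omega
    · have hcw : w.count i = s i := hcount i (by omega) hi2
      rw [← huv] at hcw
      simp only [List.count_append] at hcw ⊢
      rw [List.count_replicate, if_neg (by simp; omega)]
      omega
  · have hav' : Avoids121 (w.take p ++ w.drop p) := by rw [huv]; exact hav
    have := avoids_ins (k := s a) hu hv hmin hav'
    rw [hins]; exact this
  · rw [hins, delW_block hu hv, huv]
  · rw [hins, posW_block hsa hu, hul]

def Mfac (s : ℕ → ℕ) (n a : ℕ) : ℕ := 1 + ∑ i ∈ Finset.Icc (a+1) n, s i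

theorem StP_length {s : ℕ → ℕ} {n a : ℕ} {w : List ℕ} (h : StP s n (a+1) w) :
    w.length + 1 = Mfac s n a := by
  have hl := length_eq_sum (F := Finset.Icc (a+1) n)
    (fun x hx => Finset.mem_Icc.2 ⟨(h.1 x hx).1, (h.1 x hx).2⟩)
  have : ∑ i ∈ Finset.Icc (a+1) n, w.count i = ∑ i ∈ Finset.Icc (a+1) n, s i :=
    Finset.sum_congr rfl (fun i hi => h.2.1 i (Finset.mem_Icc.1 hi).1 (Finset.mem_Icc.1 hi).2)
  rw [Mfac, ← this, ← hl]
  omega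

noncomputable def wordStep (s : ℕ → ℕ) (n a : ℕ) (han : a ≤ n) (hsa : 1 ≤ s a) :
    {w : List ℕ // StP s n a w} ≃ Fin (Mfac s n a) × {w : List ℕ // StP s n (a+1) w} where
  toFun x :=
    (⟨posW a x.1, by
        obtain ⟨h1, h2, h3⟩ := StP_del han hsa x.2
        have := StP_length h1
        omega⟩,
     ⟨delW a x.1, (StP_del han hsa x.2).1⟩)
  invFun y :=
    ⟨insW a (s a) y.2.1 y.1.1,
      (StP_ins han hsa y.2.2 (by have := StP_length y.2.2; have := y.1.2; omega)).1⟩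
  left_inv x := Subtype.ext (StP_del han hsa x.2).2.1
  right_inv y := by
    obtain ⟨⟨p, hp⟩, ⟨w, hw⟩⟩ := y
    have hple : p ≤ w.length := by have := StP_length hw; omega
    obtain ⟨h1, h2, h3⟩ := StP_ins han hsa hw hple
    simp only [Prod.mk.injEq, Fin.mk.injEq, Subtype.mk.injEq]
    exact ⟨h3, h2⟩

theorem StP_top {s : ℕ → ℕ} {n : ℕ} (w : List ℕ) : StP s n (n+1) w ↔ w = [] := by
  constructor
  · intro h
    cases w with
    | nil => rfl
    | cons x w => have := h.1 x (List.mem_cons_self); omega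
  · rintro rfl
    refine ⟨by simp, fun i hi1 hi2 => by omega, ?_⟩
    rintro ⟨u₁, u₂, u₃, u₄, i, j, hij, h⟩
    exact absurd h.symm (by simp)

mutual
  def nLeaves : PTree → ℕ
    | .leaf => 1
    | .node _ cs => nLeavesL cs
  def nLeavesL : List PTree → ℕ
    | [] => 0
    | t :: ts => nLeaves t + nLeavesL ts
end

mutual
  def insT (a k : ℕ) : PTree → ℕ → PTree
    | .leaf, _ => .node a (List.replicate k .leaf)
    | .node i cs, p => .node i (insL a k cs p)
  def insL (a k : ℕ) : List PTree → ℕ → List PTree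
    | [], _ => []
    | t :: ts, p =>
        if p < nLeaves t then insT a k t p :: ts else t :: insL a k ts (p - nLeaves t)
end

mutual
  def delT (a : ℕ) : PTree → PTree
    | .leaf => .leaf
    | .node i cs => if i = a then .leaf else .node i (delL a cs)
  def delL (a : ℕ) : List PTree → List PTree
    | [] => []
    | t :: ts => delT a t :: delL a ts
end

mutual
  def posT (a : ℕ) : PTree → ℕ
    | .leaf => 0
    | .node i cs => if i = a then 0 else posL a cs
  def posL (a : ℕ) : List PTree → ℕ
    | [] => 0
    | t :: ts => if a ∈ labels t then posT a t else nLeaves (delT a t) + posL a ts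
end

theorem labels_eq_nil {t : PTree} (h : labels t = []) : t = .leaf := by
  cases t with
  | leaf => rfl
  | node i cs => simp [labels] at h

theorem labelsList_replicate_leaf (k : ℕ) :
    labelsList (List.replicate k PTree.leaf) = [] := by
  induction k with
  | zero => simp [labelsList]
  | succ k ih => rw [List.replicate_succ]; simp [labelsList, labels, ih]

theorem children_leaf {cs : List PTree} (h : labelsList cs = []) :
    ∀ c ∈ cs, c = PTree.leaf := by
  induction cs with
  | nil => simp
  | cons t ts ih =>
    rw [labelsList] at h
    rcases List.append_eq_nil_iff.1 h with ⟨h1, h2⟩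
    intro c hc
    rcases List.mem_cons.1 hc with rfl | hc
    · exact labels_eq_nil h1
    · exact ih h2 c hc

mutual
  theorem del_id {a : ℕ} : ∀ t : PTree, a ∉ labels t → delT a t = t
    | .leaf, _ => rfl
    | .node i cs, h => by
        rw [delT, if_neg, delL_id cs (fun hm => h (by rw [labels]; exact List.mem_cons_of_mem _ hm))]
        intro he
        exact h (by rw [labels, he]; exact List.mem_cons_self)
  theorem delL_id {a : ℕ} : ∀ ts : List PTree, a ∉ labelsList ts → delL a ts = ts
    | [], _ => rfl
    | t :: ts, h => by
        rw [delL, del_id t (fun hm => h (by rw [labelsList]; exact List.mem_append.2 (Or.inl hm))),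
          delL_id ts (fun hm => h (by rw [labelsList]; exact List.mem_append.2 (Or.inr hm)))]
end

theorem length_delL (a : ℕ) (ts : List PTree) : (delL a ts).length = ts.length := by
  induction ts with
  | nil => rfl
  | cons t ts ih => rw [delL]; simp [ih]

mutual
  theorem leavesT_eq (s : ℕ → ℕ) : ∀ t : PTree, IsSDecAux s t →
      nLeaves t = 1 + ((labels t).map s).sum
    | .leaf, _ => by simp [nLeaves, labels]
    | .node i cs, h => by
        rw [IsSDecAux] at h
        rw [nLeaves, labels, leavesL_eq s cs h.2.2, h.1]
        simp
        omega
  theorem leavesL_eq (s : ℕ → ℕ) : ∀ ts : List PTree, IsSDecList s ts →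
      nLeavesL ts = ts.length + ((labelsList ts).map s).sum
    | [], _ => by simp [nLeavesL, labelsList]
    | t :: ts, h => by
        rw [IsSDecList] at h
        rw [nLeavesL, labelsList, leavesT_eq s t h.1, leavesL_eq s ts h.2]
        simp
        omega
end





theorem length_insL (a k : ℕ) (ts : List PTree) (p : ℕ) :
    (insL a k ts p).length = ts.length := by
  induction ts generalizing p with
  | nil => rfl
  | cons t ts ih =>
    rw [insL]
    by_cases h : p < nLeaves t
    · rw [if_pos h]; simp
    · rw [if_neg h]; simp [ih]

mutual
  theorem labels_insT (a k : ℕ) : ∀ (t : PTree) (p : ℕ), p < nLeaves t →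
      (labels (insT a k t p)).Perm (a :: labels t)
    | .leaf, p, _ => by
        simp [insT, labels, labelsList_replicate_leaf]
    | .node i cs, p, hp => by
        rw [insT, labels, labels]
        exact ((labels_insL a k cs p (by rwa [nLeaves] at hp)).cons i).trans
          (List.Perm.swap a i _)
  theorem labels_insL (a k : ℕ) : ∀ (ts : List PTree) (p : ℕ), p < nLeavesL ts →
      (labelsList (insL a k ts p)).Perm (a :: labelsList ts)
    | [], p, hp => by rw [nLeavesL] at hp; omega
    | t :: ts, p, hp => by
        rw [nLeavesL] at hp
        rw [insL]
        by_cases h : p < nLeaves t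
        · rw [if_pos h, labelsList, labelsList]
          exact (labels_insT a k t p h).append_right _
        · rw [if_neg h, labelsList, labelsList]
          exact ((labels_insL a k ts (p - nLeaves t) (by omega)).append_left _).trans
            List.perm_middle
end

mutual
  theorem sdec_insT (s : ℕ → ℕ) (a : ℕ) : ∀ (t : PTree) (p : ℕ), IsSDecAux s t →
      (∀ j ∈ labels t, a < j) → p < nLeaves t → IsSDecAux s (insT a (s a + 1) t p)
    | .leaf, p, _, _, _ => by
        rw [insT, IsSDecAux]
        refine ⟨by simp, ?_, ?_⟩
        · rw [labelsList_replicate_leaf]; simp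
        · -- IsSDecList of replicate leaf
          clear * -
          induction (s a + 1) with
          | zero => rw [List.replicate]; exact trivial
          | succ m ih => rw [List.replicate_succ, IsSDecList]; exact ⟨trivial, ih⟩
    | .node i cs, p, h, hmin, hp => by
        rw [IsSDecAux] at h
        rw [insT, IsSDecAux]
        have hperm := labels_insL a (s a + 1) cs p (by rwa [nLeaves] at hp)
        refine ⟨?_, ?_, ?_⟩
        · rw [length_insL a (s a + 1) cs p, h.1]
        · intro j hj
          rcases List.mem_cons.1 (hperm.subset hj) with rfl | hj2
          · exact hmin i (by rw [labels]; exact List.mem_cons_self)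
          · exact h.2.1 j hj2
        · exact sdec_insL s a cs p h.2.2
            (fun j hj => hmin j (by rw [labels]; exact List.mem_cons_of_mem _ hj))
            (by rwa [nLeaves] at hp)
  theorem sdec_insL (s : ℕ → ℕ) (a : ℕ) : ∀ (ts : List PTree) (p : ℕ), IsSDecList s ts →
      (∀ j ∈ labelsList ts, a < j) → p < nLeavesL ts → IsSDecList s (insL a (s a + 1) ts p)
    | [], p, h, _, _ => trivial
    | t :: ts, p, h, hmin, hp => by
        rw [IsSDecList] at h
        rw [nLeavesL] at hp
        rw [insL]
        by_cases hc : p < nLeaves t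
        · rw [if_pos hc, IsSDecList]
          exact ⟨sdec_insT s a t p h.1
            (fun j hj => hmin j (by rw [labelsList]; exact List.mem_append.2 (Or.inl hj))) hc,
            h.2⟩
        · rw [if_neg hc, IsSDecList]
          exact ⟨h.1, sdec_insL s a ts (p - nLeaves t) h.2
            (fun j hj => hmin j (by rw [labelsList]; exact List.mem_append.2 (Or.inr hj)))
            (by omega)⟩
end

mutual
  theorem del_insT (a k : ℕ) : ∀ (t : PTree) (p : ℕ), a ∉ labels t → p < nLeaves t →
      delT a (insT a k t p) = t
    | .leaf, p, _, _ => by rw [insT, delT, if_pos rfl]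
    | .node i cs, p, h, hp => by
        have hia : i ≠ a := fun he => h (by rw [labels, he]; exact List.mem_cons_self)
        rw [insT, delT, if_neg hia,
          del_insL a k cs p (fun hm => h (by rw [labels]; exact List.mem_cons_of_mem _ hm))
            (by rwa [nLeaves] at hp)]
  theorem del_insL (a k : ℕ) : ∀ (ts : List PTree) (p : ℕ), a ∉ labelsList ts →
      p < nLeavesL ts → delL a (insL a k ts p) = ts
    | [], p, _, hp => by rw [nLeavesL] at hp; omega
    | t :: ts, p, h, hp => by
        rw [nLeavesL] at hp
        have hat : a ∉ labels t := fun hm => h (by rw [labelsList]; exact List.mem_append.2 (Or.inl hm))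
        have hats : a ∉ labelsList ts := fun hm => h (by rw [labelsList]; exact List.mem_append.2 (Or.inr hm))
        rw [insL]
        by_cases hc : p < nLeaves t
        · rw [if_pos hc, delL, del_insT a k t p hat hc, delL_id ts hats]
        · rw [if_neg hc, delL, del_id t hat, del_insL a k ts (p - nLeaves t) hats (by omega)]
end

mutual
  theorem pos_insT (a k : ℕ) : ∀ (t : PTree) (p : ℕ), a ∉ labels t → p < nLeaves t →
      posT a (insT a k t p) = p
    | .leaf, p, _, hp => by
        rw [insT, posT, if_pos rfl]
        rw [nLeaves] at hp
        omega
    | .node i cs, p, h, hp => by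
        have hia : i ≠ a := fun he => h (by rw [labels, he]; exact List.mem_cons_self)
        rw [insT, posT, if_neg hia,
          pos_insL a k cs p (fun hm => h (by rw [labels]; exact List.mem_cons_of_mem _ hm))
            (by rwa [nLeaves] at hp)]
  theorem pos_insL (a k : ℕ) : ∀ (ts : List PTree) (p : ℕ), a ∉ labelsList ts →
      p < nLeavesL ts → posL a (insL a k ts p) = p
    | [], p, _, hp => by rw [nLeavesL] at hp; omega
    | t :: ts, p, h, hp => by
        rw [nLeavesL] at hp
        have hat : a ∉ labels t := fun hm => h (by rw [labelsList]; exact List.mem_append.2 (Or.inl hm))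
        have hats : a ∉ labelsList ts := fun hm => h (by rw [labelsList]; exact List.mem_append.2 (Or.inr hm))
        rw [insL]
        by_cases hc : p < nLeaves t
        · rw [if_pos hc, posL, if_pos (((labels_insT a k t p hc).mem_iff).2 (List.mem_cons_self)),
            pos_insT a k t p hat hc]
        · rw [if_neg hc, posL, if_neg hat, del_id t hat,
            pos_insL a k ts (p - nLeaves t) hats (by omega)]
          omega
end

mutual
  theorem recT (s : ℕ → ℕ) (a : ℕ) : ∀ t : PTree, IsSDecAux s t →
      (∀ j ∈ labels t, a ≤ j) → (labels t).count a = 1 →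
      IsSDecAux s (delT a t) ∧ (labels (delT a t)).Perm ((labels t).erase a) ∧
      insT a (s a + 1) (delT a t) (posT a t) = t ∧ posT a t < nLeaves (delT a t)
    | .leaf, _, _, hc => by simp [labels] at hc
    | .node i cs, h, hmin, hc => by
        rw [IsSDecAux] at h
        rw [labels] at hc hmin
        by_cases hia : i = a
        · subst hia
          have hnil : labelsList cs = [] := by
            rcases List.eq_nil_or_concat (labelsList cs) with h0 | ⟨l', b, h0⟩
            · exact h0
            · exfalso
              have hb : b ∈ labelsList cs := by rw [h0]; simp
              have h1 := h.2.1 b hb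
              have h2 := hmin b (List.mem_cons_of_mem _ hb)
              omega
          have hcs : cs = List.replicate (s i + 1) PTree.leaf :=
            List.eq_replicate_iff.2 ⟨h.1, fun c hc => children_leaf hnil c hc⟩
          rw [delT, if_pos rfl, posT, if_pos rfl]
          refine ⟨trivial, ?_, ?_, ?_⟩
          · rw [labels, labels, hnil]
            simp
          · rw [insT, ← hcs]
          · rw [nLeaves]; omega
        · have hca : (labelsList cs).count a = 1 := by
            rw [List.count_cons] at hc
            simp [hia] at hc
            exact hc
          have hminL : ∀ j ∈ labelsList cs, a ≤ j :=
            fun j hj => hmin j (List.mem_cons_of_mem _ hj)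
          obtain ⟨r1, r2, r3, r4⟩ := recL s a cs h.2.2 hminL hca
          rw [delT, if_neg hia, posT, if_neg hia]
          refine ⟨?_, ?_, ?_, ?_⟩
          · rw [IsSDecAux]
            refine ⟨by rw [length_delL, h.1], ?_, r1⟩
            intro j hj
            exact h.2.1 j (List.mem_of_mem_erase (r2.subset hj))
          · rw [labels, labels, List.erase_cons_tail]
            · exact r2.cons i
            · simp [hia]
          · rw [insT, r3]
          · rw [nLeaves]; exact r4
  theorem recL (s : ℕ → ℕ) (a : ℕ) : ∀ ts : List PTree, IsSDecList s ts →
      (∀ j ∈ labelsList ts, a ≤ j) → (labelsList ts).count a = 1 →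
      IsSDecList s (delL a ts) ∧ (labelsList (delL a ts)).Perm ((labelsList ts).erase a) ∧
      insL a (s a + 1) (delL a ts) (posL a ts) = ts ∧ posL a ts < nLeavesL (delL a ts)
    | [], _, _, hc => by simp [labelsList] at hc
    | t :: ts, h, hmin, hc => by
        rw [IsSDecList] at h
        rw [labelsList] at hc hmin
        rw [List.count_append] at hc
        have hminT : ∀ j ∈ labels t, a ≤ j := fun j hj => hmin j (List.mem_append.2 (Or.inl hj))
        have hminL : ∀ j ∈ labelsList ts, a ≤ j := fun j hj => hmin j (List.mem_append.2 (Or.inr hj))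
        by_cases hat : a ∈ labels t
        · have hct : (labels t).count a = 1 := by
            have := List.count_pos_iff.2 hat
            omega
          have hcts : (labelsList ts).count a = 0 := by omega
          have hats : a ∉ labelsList ts := List.count_eq_zero.1 hcts
          obtain ⟨r1, r2, r3, r4⟩ := recT s a t h.1 hminT hct
          rw [delL, posL, if_pos hat, delL_id ts hats]
          refine ⟨⟨r1, h.2⟩, ?_, ?_, ?_⟩
          · rw [labelsList, labelsList, List.erase_append_left _ hat]
            exact r2.append_right _
          · rw [insL, if_pos r4, r3]
          · rw [nLeavesL]; omega
        · have hct : (labels t).count a = 0 := List.count_eq_zero.2 hat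
          have hcts : (labelsList ts).count a = 1 := by omega
          obtain ⟨r1, r2, r3, r4⟩ := recL s a ts h.2 hminL hcts
          rw [delL, posL, if_neg hat, del_id t hat]
          refine ⟨⟨h.1, r1⟩, ?_, ?_, ?_⟩
          · rw [labelsList, labelsList, List.erase_append_right _ hat]
            exact r2.append_left _
          · rw [insL, if_neg (by omega)]
            congr 1
            rw [show nLeaves t + posL a ts - nLeaves t = posL a ts by omega, r3]
          · rw [nLeavesL]; omega
end

/-! ### Tree-side step -/

def TrP (s : ℕ → ℕ) (n a : ℕ) (T : PTree) : Prop :=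
  IsSDecAux s T ∧ (labels T).Perm (List.range' a (n + 1 - a))

theorem sum_map_range' (s : ℕ → ℕ) : ∀ (k b : ℕ),
    ((List.range' b k).map s).sum = ∑ i ∈ Finset.Ico b (b + k), s i := by
  intro k
  induction k with
  | zero => intro b; simp
  | succ k ih =>
    intro b
    rw [List.range'_succ, List.map_cons, List.sum_cons, ih (b+1)]
    have h1 : ∑ i ∈ Finset.Ico b (b+(k+1)), s i = ∑ i ∈ Finset.range (k+1), s (b+i) := by
      rw [Finset.sum_Ico_eq_sum_range, show b+(k+1)-b = k+1 by omega]
    have h2 : ∑ i ∈ Finset.Ico (b+1) (b+1+k), s i = ∑ i ∈ Finset.range k, s (b+1+i) := by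
      rw [Finset.sum_Ico_eq_sum_range, show b+1+k-(b+1) = k by omega]
    rw [h1, h2, Finset.sum_range_succ',
      Finset.sum_congr rfl (fun i (_ : i ∈ Finset.range k) =>
        (by congr 1; omega : s (b+1+i) = s (b+(i+1)))), Nat.add_zero]
    omega

theorem TrP_nLeaves {s : ℕ → ℕ} {n a : ℕ} {T : PTree} (han : a ≤ n)
    (h : TrP s n (a+1) T) : nLeaves T = Mfac s n a := by
  rw [leavesT_eq s T h.1, Mfac]
  congr 1
  rw [(h.2.map s).sum_eq, sum_map_range' s (n+1-(a+1)) (a+1),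
    show a+1 + (n+1-(a+1)) = n+1 by omega, Finset.Ico_add_one_right_eq_Icc]

theorem TrP_top {s : ℕ → ℕ} {n : ℕ} (T : PTree) : TrP s n (n+1) T ↔ T = .leaf := by
  constructor
  · intro h
    have h2 := h.2
    rw [show n + 1 - (n+1) = 0 by omega] at h2
    simp only [List.range'] at h2
    exact labels_eq_nil h2.eq_nil
  · rintro rfl
    refine ⟨trivial, ?_⟩
    rw [show n + 1 - (n+1) = 0 by omega]
    simp [labels]

theorem TrP_del {s : ℕ → ℕ} {n a : ℕ} {T : PTree} (han : a ≤ n) (h : TrP s n a T) :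
    TrP s n (a+1) (delT a T) ∧ insT a (s a + 1) (delT a T) (posT a T) = T ∧
    posT a T < nLeaves (delT a T) := by
  have hsplit : List.range' a (n+1-a) = a :: List.range' (a+1) (n-a) := by
    rw [show n+1-a = (n-a)+1 by omega, List.range'_succ]
  have hmin : ∀ j ∈ labels T, a ≤ j := by
    intro j hj
    have hm := h.2.subset hj
    rw [hsplit] at hm
    rcases List.mem_cons.1 hm with rfl | hm2
    · exact le_rfl
    · have := (List.mem_range'_1.1 hm2).1; omega
  have hcount : (labels T).count a = 1 := by
    rw [h.2.count_eq, hsplit, List.count_cons_self, List.count_eq_zero.2]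
    intro hm
    have := (List.mem_range'_1.1 hm).1; omega
  obtain ⟨r1, r2, r3, r4⟩ := recT s a T h.1 hmin hcount
  have hperm : (labels (delT a T)).Perm (List.range' (a+1) (n+1-(a+1))) := by
    rw [Nat.succ_sub_succ]
    refine (r2.trans (h.2.erase a)).trans ?_
    rw [hsplit, List.erase_cons_head]
  exact ⟨⟨r1, hperm⟩, r3, r4⟩

theorem TrP_ins {s : ℕ → ℕ} {n a p : ℕ} {T : PTree} (han : a ≤ n)
    (h : TrP s n (a+1) T) (hp : p < nLeaves T) :
    TrP s n a (insT a (s a + 1) T p) ∧ delT a (insT a (s a + 1) T p) = T ∧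
    posT a (insT a (s a + 1) T p) = p := by
  have hmin : ∀ j ∈ labels T, a < j := by
    intro j hj
    have := (List.mem_range'_1.1 (h.2.subset hj)).1
    omega
  have hnot : a ∉ labels T := fun hm => absurd (hmin a hm) (lt_irrefl a)
  refine ⟨⟨sdec_insT s a T p h.1 hmin hp, ?_⟩, del_insT a _ T p hnot hp,
    pos_insT a _ T p hnot hp⟩
  refine (labels_insT a _ T p hp).trans ?_
  refine (h.2.cons a).trans ?_
  rw [Nat.succ_sub_succ, show n+1-a = (n-a)+1 by omega, List.range'_succ]

noncomputable def treeStep (s : ℕ → ℕ) (n a : ℕ) (han : a ≤ n) :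
    {T : PTree // TrP s n a T} ≃ Fin (Mfac s n a) × {T : PTree // TrP s n (a+1) T} where
  toFun x :=
    (⟨posT a x.1, by
        obtain ⟨h1, h2, h3⟩ := TrP_del han x.2
        rwa [TrP_nLeaves han h1] at h3⟩,
     ⟨delT a x.1, (TrP_del han x.2).1⟩)
  invFun y :=
    ⟨insT a (s a + 1) y.2.1 y.1.1,
      (TrP_ins han y.2.2 (by rw [TrP_nLeaves han y.2.2]; exact y.1.2)).1⟩
  left_inv x := Subtype.ext (TrP_del han x.2).2.1
  right_inv y := by
    obtain ⟨⟨p, hp⟩, ⟨T, hT⟩⟩ := y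
    have hp' : p < nLeaves T := by rw [TrP_nLeaves han hT]; exact hp
    obtain ⟨h1, h2, h3⟩ := TrP_ins han hT hp'
    simp only [Prod.mk.injEq, Fin.mk.injEq, Subtype.mk.injEq]
    exact ⟨h3, h2⟩

/-! ### The induction -/

theorem chain (s : ℕ → ℕ) (n : ℕ) (hs : ∀ i, 1 ≤ i → i ≤ n → 1 ≤ s i) :
    ∀ (k a : ℕ), a + k = n + 1 → 1 ≤ a →
      Nonempty ({w : List ℕ // StP s n a w} ≃ {T : PTree // TrP s n a T}) ∧
      Nat.card {w : List ℕ // StP s n a w} = ∏ i ∈ Finset.Icc a n, Mfac s n i ∧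
      Finite {w : List ℕ // StP s n a w} := by
  intro k
  induction k with
  | zero =>
    intro a ha _
    have haeq : a = n + 1 := by omega
    subst haeq
    have e : {w : List ℕ // StP s n (n+1) w} ≃ Unit :=
      { toFun := fun _ => Unit.unit
        invFun := fun _ => ⟨[], (StP_top _).2 rfl⟩
        left_inv := fun x => Subtype.ext ((StP_top x.1).1 x.2).symm
        right_inv := fun _ => rfl }
    refine ⟨⟨⟨fun _ => ⟨.leaf, (TrP_top _).2 rfl⟩, fun _ => ⟨[], (StP_top _).2 rfl⟩,
        fun x => Subtype.ext ((StP_top x.1).1 x.2).symm,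
        fun y => Subtype.ext ((TrP_top y.1).1 y.2).symm⟩⟩, ?_, ?_⟩
    · rw [Nat.card_congr e, Finset.Icc_eq_empty (by omega)]
      simp
    · exact Finite.of_equiv Unit e.symm
  | succ k ih =>
    intro a ha ha1
    have han : a ≤ n := by omega
    have hsa : 1 ≤ s a := hs a ha1 han
    obtain ⟨⟨e⟩, hcard, hfin⟩ := ih (a+1) (by omega) (by omega)
    haveI := hfin
    let ew := wordStep s n a han hsa
    let et := treeStep s n a han
    refine ⟨⟨ew.trans (((Equiv.refl (Fin (Mfac s n a))).prodCongr e).trans et.symm)⟩, ?_, ?_⟩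
    · rw [Nat.card_congr ew, Nat.card_prod, hcard,
        Finset.Icc_eq_cons_Ioc han, Finset.prod_cons, ← Finset.Icc_add_one_left_eq_Ioc]
      simp
    · exact Finite.of_equiv _ ew.symm

/-- For a composition `s` of positive integers, the set of
Stirling `s`-permutations is in bijection with the set of `s`-decreasing trees;
in particular their number is `∏_{i=1}^{n-1} (1 + s_{n-i+1} + ⋯ + s_n)`. -/
theorem stirling_equiv_trees_and_card (n : ℕ) (s : ℕ → ℕ)
    (hs : ∀ i, 1 ≤ i → i ≤ n → 1 ≤ s i) :
    Nonempty ({w : List ℕ // IsStirling s n w} ≃ {T : PTree // IsSDecTree s n T}) ∧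
    Nat.card {w : List ℕ // IsStirling s n w} =
      ∏ i ∈ Finset.Icc 1 (n - 1), (1 + ∑ r ∈ Finset.Icc (n - i + 1) n, s r) := by
  obtain ⟨hne, hcard, hfin⟩ := chain s n hs n 1 (by omega) le_rfl
  constructor
  · exact hne
  · rw [show (Nat.card {w : List ℕ // IsStirling s n w})
        = Nat.card {w : List ℕ // StP s n 1 w} from rfl, hcard]
    rcases Nat.eq_zero_or_pos n with rfl | hn
    · simp
    · rw [Finset.Icc_eq_cons_Ico hn, Finset.prod_cons]
      have hM : Mfac s n n = 1 := by
        rw [Mfac, Finset.Icc_eq_empty (by omega), Finset.sum_empty]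
        rfl
      have h2 : Finset.Ico 1 n = Finset.Icc 1 (n-1) := by
        rw [← Finset.Ico_add_one_right_eq_Icc]; congr 1; omega
      rw [hM, one_mul, h2]
      refine Finset.prod_nbij' (fun i => n - i) (fun i => n - i) ?_ ?_ ?_ ?_ ?_
      · intro a haa
        simp only [Finset.mem_Icc] at haa ⊢
        omega
      · intro a haa
        simp only [Finset.mem_Icc] at haa ⊢
        omega
      · intro a haa
        simp only [Finset.mem_Icc] at haa
        omega
      · intro a haa
        simp only [Finset.mem_Icc] at haa
        omega
      · intro a haa
        rw [Finset.mem_Icc] at haa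
        rw [Mfac, show n - (n - a) + 1 = a + 1 from by omega]

end SPermutahedron
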